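/- Let N ≥ 2, let a ∈ ℝ, and let L_p and L_c be real symmetric N×N matrices with L_p·𝟏 = 0 and L_c·𝟏 = 0 (𝟏 the all-ones vector). Suppose there are reals λpmin ≤ λpmax and 0 < λcmin ≤ λcmax such that for every v ∈ ℝ^N orthogonal to 𝟏: λpmin·‖v‖² ≤ vᵀL_p v ≤ λpmax·‖v‖² and λcmin·‖v‖² ≤ vᵀL_c v ≤ λcmax·‖v‖². Set γc = λcmax/λcmin and Δp = λpmax − λpmin. If λpmax < 1 + a and (γc − 1)(−1 − a + λpmax) > γc(Δp − 2), then there exists k < 0 with (−1 − a + λpmax)/λcmax < k < (1 − a + λpmin)/λcmin, and for any such k the matrix powers (a·I_N − L_p + k·L_c)^t composed with the projection I_N − (1/N)·𝟏𝟏ᵀ converge to the zero matrix as t → ∞. -/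

import Mathlib

open Matrix Finset


lemma aux_eig_abs_le {N : ℕ} {Q : Matrix (Fin N) (Fin N) ℝ} (hQ : Q.IsHermitian)
    {ρ : ℝ} (h : ∀ v : Fin N → ℝ, |v ⬝ᵥ (Q *ᵥ v)| ≤ ρ * (v ⬝ᵥ v)) (i : Fin N) :
    |hQ.eigenvalues i| ≤ ρ := by
  set v : Fin N → ℝ := ⇑(hQ.eigenvectorBasis i) with hv
  have hev : Q *ᵥ v = hQ.eigenvalues i • v := hQ.mulVec_eigenvectorBasis i
  have hn : v ⬝ᵥ v = 1 := by
    have h1 : ‖hQ.eigenvectorBasis i‖ = 1 := hQ.eigenvectorBasis.orthonormal.1 i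
    have h2 : (inner ℝ (hQ.eigenvectorBasis i) (hQ.eigenvectorBasis i) : ℝ) = 1 := by
      rw [real_inner_self_eq_norm_sq, h1]; norm_num
    rw [← h2, PiLp.inner_apply]
    simp [dotProduct, hv, mul_comm, sq]
  have := h v
  rw [hev] at this
  simpa [dotProduct_smul, hn, smul_eq_mul] using this

lemma aux_pow_tendsto {N : ℕ} {Q : Matrix (Fin N) (Fin N) ℝ} (hQ : Q.IsHermitian)
    (h : ∀ i, |hQ.eigenvalues i| < 1) :
    Filter.Tendsto (fun t : ℕ => Q ^ t) Filter.atTop (nhds 0) := by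
  set U : Matrix (Fin N) (Fin N) ℝ := (hQ.eigenvectorUnitary : Matrix (Fin N) (Fin N) ℝ) with hU
  set μ : Fin N → ℝ := hQ.eigenvalues with hμ
  have hUU : star U * U = 1 := Unitary.coe_star_mul_self hQ.eigenvectorUnitary
  have hUU' : U * star U = 1 := Unitary.coe_mul_star_self hQ.eigenvectorUnitary
  have hspec : Q = U * diagonal μ * star U := by
    simpa using hQ.spectral_theorem
  have hpow : ∀ t : ℕ, Q ^ t = U * diagonal (fun i => μ i ^ t) * star U := by
    intro t
    induction t with
    | zero => simp [hUU']
    | succ t ih =>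
      rw [pow_succ, ih, hspec]
      rw [show U * diagonal (fun i => μ i ^ t) * star U * (U * diagonal μ * star U)
          = U * (diagonal (fun i => μ i ^ t) * (star U * U) * diagonal μ) * star U by
        noncomm_ring]
      rw [hUU, mul_one, diagonal_mul_diagonal,
        show (fun i => μ i ^ t * μ i) = fun i => μ i ^ (t+1) from funext fun i => by ring]
  have hcont : Continuous fun X : Matrix (Fin N) (Fin N) ℝ => U * X * star U :=
    (continuous_const.matrix_mul continuous_id).matrix_mul continuous_const
  have hd0 : Filter.Tendsto (fun t : ℕ => (fun i => μ i ^ t)) Filter.atTop (nhds 0) := by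
    rw [tendsto_pi_nhds]
    intro i
    simpa using tendsto_pow_atTop_nhds_zero_of_abs_lt_one (h i)
  have hd : Filter.Tendsto (fun t : ℕ => diagonal (fun i => μ i ^ t)) Filter.atTop
      (nhds (0 : Matrix (Fin N) (Fin N) ℝ)) := by
    have := ((continuous_id.matrix_diagonal (R := ℝ) (n := Fin N)).tendsto 0).comp hd0
    rw [show diagonal (id (0 : Fin N → ℝ)) = 0 from diagonal_zero] at this
    exact this
  have := (hcont.tendsto 0).comp hd
  simp only [Function.comp, mul_zero, zero_mul] at this
  exact this.congr fun t => (hpow t).symm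

theorem stmt_3 (N : ℕ) (hN : 2 ≤ N) (a : ℝ)
    (Lp Lc : Matrix (Fin N) (Fin N) ℝ)
    (hLpsymm : Lp.IsSymm) (hLcsymm : Lc.IsSymm)
    (hLp1 : Lp *ᵥ (fun _ => (1 : ℝ)) = 0) (hLc1 : Lc *ᵥ (fun _ => (1 : ℝ)) = 0)
    (lpmin lpmax lcmin lcmax : ℝ) (hp : lpmin ≤ lpmax)
    (hc0 : 0 < lcmin) (hc : lcmin ≤ lcmax)
    (hqp : ∀ v : Fin N → ℝ, (∑ i, v i) = 0 →
      lpmin * (v ⬝ᵥ v) ≤ v ⬝ᵥ (Lp *ᵥ v) ∧ v ⬝ᵥ (Lp *ᵥ v) ≤ lpmax * (v ⬝ᵥ v))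
    (hqc : ∀ v : Fin N → ℝ, (∑ i, v i) = 0 →
      lcmin * (v ⬝ᵥ v) ≤ v ⬝ᵥ (Lc *ᵥ v) ∧ v ⬝ᵥ (Lc *ᵥ v) ≤ lcmax * (v ⬝ᵥ v))
    (γc Δp : ℝ) (hγ : γc = lcmax / lcmin) (hΔ : Δp = lpmax - lpmin)
    (hC2a : lpmax < 1 + a) (hC2b : (γc - 1) * (-1 - a + lpmax) > γc * (Δp - 2)) :
    (∃ k : ℝ, k < 0 ∧ (-1 - a + lpmax) / lcmax < k ∧ k < (1 - a + lpmin) / lcmin) ∧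
    ∀ k : ℝ, k < 0 → (-1 - a + lpmax) / lcmax < k → k < (1 - a + lpmin) / lcmin →
      Filter.Tendsto
        (fun t : ℕ => (a • (1 : Matrix (Fin N) (Fin N) ℝ) - Lp + k • Lc) ^ t *
          ((1 : Matrix (Fin N) (Fin N) ℝ) - (N : ℝ)⁻¹ • Matrix.of fun _ _ => (1 : ℝ)))
        Filter.atTop (nhds 0) := by
  have hc2 : (0:ℝ) < lcmax := hc0.trans_le hc
  have hAneg : -1 - a + lpmax < 0 := by linarith
  have hNR : (0:ℝ) < (N:ℝ) := by
    have : (2:ℝ) ≤ (N:ℝ) := by exact_mod_cast hN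
    linarith
  -- interval nonemptiness
  have hlu : (-1 - a + lpmax) / lcmax < (1 - a + lpmin) / lcmin := by
    rw [div_lt_div_iff₀ hc2 hc0]
    rw [hγ, hΔ] at hC2b
    have hmax : lcmax = (lcmax / lcmin) * lcmin := (div_mul_cancel₀ _ hc0.ne').symm
    nlinarith [hC2b, hc0, hmax]
  constructor
  · refine ⟨((-1 - a + lpmax)/lcmax + min ((1 - a + lpmin)/lcmin) 0)/2, ?_, ?_, ?_⟩
    · have h2 : (-1-a+lpmax)/lcmax < 0 := div_neg_of_neg_of_pos hAneg hc2
      have h3 : (-1-a+lpmax)/lcmax < min ((1 - a + lpmin)/lcmin) 0 := lt_min hlu h2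
      have h4 := min_le_right ((1 - a + lpmin)/lcmin) (0:ℝ)
      linarith
    · have h2 : (-1-a+lpmax)/lcmax < 0 := div_neg_of_neg_of_pos hAneg hc2
      have h3 : (-1-a+lpmax)/lcmax < min ((1 - a + lpmin)/lcmin) 0 := lt_min hlu h2
      linarith
    · have h2 : (-1-a+lpmax)/lcmax < 0 := div_neg_of_neg_of_pos hAneg hc2
      have h3 : (-1-a+lpmax)/lcmax < min ((1 - a + lpmin)/lcmin) 0 := lt_min hlu h2
      have h4 := min_le_left ((1 - a + lpmin)/lcmin) (0:ℝ)
      linarith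
  intro k hk0 hkl hku
  set M : Matrix (Fin N) (Fin N) ℝ := a • 1 - Lp + k • Lc with hM
  set J : Matrix (Fin N) (Fin N) ℝ := Matrix.of fun _ _ => (1:ℝ) with hJ
  set P : Matrix (Fin N) (Fin N) ℝ := 1 - (N:ℝ)⁻¹ • J with hP
  -- row/column sums of M
  have hM1 : M *ᵥ (fun _ => (1:ℝ)) = fun _ => a := by
    funext i
    simp [hM, sub_mulVec, add_mulVec, smul_mulVec, hLp1, hLc1, one_mulVec]
  have hMsymm : Mᵀ = M := by
    simp [hM, transpose_add, transpose_sub, transpose_smul, transpose_one, hLpsymm.eq,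
      hLcsymm.eq]
  have hrow : ∀ i, ∑ l, M i l = a := by
    intro i
    have := congrFun hM1 i
    simpa [mulVec, dotProduct] using this
  have hMJ : M * J = Matrix.of fun _ _ => a := by
    ext i j
    simp [hJ, mul_apply, hrow i]
  have hJM : J * M = Matrix.of fun _ _ => a := by
    ext i j
    have : ∑ l, M l j = ∑ l, M j l := by
      refine Finset.sum_congr rfl fun l _ => ?_
      conv_lhs => rw [← hMsymm]
      rfl
    simp [hJ, mul_apply, this, hrow j]
  have hcomm : M * P = P * M := by
    simp only [hP, mul_sub, sub_mul, mul_one, one_mul, Matrix.mul_smul, Matrix.smul_mul,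
      hMJ, hJM]
  have hJJ : J * J = (N:ℝ) • J := by
    ext i j
    simp [hJ, mul_apply]
  have hPP : P * P = P := by
    have key : (N:ℝ)⁻¹ • ((N:ℝ)⁻¹ • ((N:ℝ) • J)) = (N:ℝ)⁻¹ • J := by
      rw [smul_smul, smul_smul]
      congr 1
      field_simp
    simp only [hP, mul_sub, sub_mul, mul_one, one_mul, Matrix.mul_smul, Matrix.smul_mul, hJJ,
      key]
    abel
  have hPsymm : Pᵀ = P := by
    have : Jᵀ = J := by ext i j; simp [hJ]
    simp [hP, transpose_sub, transpose_smul, transpose_one, this]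
  set Q : Matrix (Fin N) (Fin N) ℝ := M * P with hQ
  clear_value Q
  have hQsymm : Qᵀ = Q := by
    rw [hQ, transpose_mul, hPsymm, hMsymm]
    exact hcomm.symm.trans hQ
  have hQherm : Q.IsHermitian := by
    rw [Matrix.IsHermitian, conjTranspose_eq_transpose_of_trivial]
    exact hQsymm
  have hPM : P * M = M * P := hcomm.symm.trans hQ
  have hQ2 : P * (M * P) = Q := by
    rw [← mul_assoc, hPM, mul_assoc, hPP, ← hQ]
  -- P *ᵥ v facts
  have hPv : ∀ v : Fin N → ℝ, P *ᵥ v = fun i => v i - (N:ℝ)⁻¹ * ∑ j, v j := by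
    intro v
    funext i
    simp [hP, sub_mulVec, smul_mulVec, one_mulVec, hJ, mulVec, dotProduct,
      Finset.mul_sum, sub_mul, Finset.sum_sub_distrib, Matrix.one_apply, ite_mul]
  have hsum : ∀ v : Fin N → ℝ, ∑ i, (P *ᵥ v) i = 0 := by
    intro v
    rw [hPv v]
    rw [Finset.sum_sub_distrib, Finset.sum_const, Finset.card_univ, Fintype.card_fin, nsmul_eq_mul]
    field_simp
    simp
  have hwle : ∀ v : Fin N → ℝ, (P *ᵥ v) ⬝ᵥ (P *ᵥ v) ≤ v ⬝ᵥ v := by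
    intro v
    rw [hPv v]
    set c : ℝ := (N:ℝ)⁻¹ * ∑ j, v j with hcdef
    have hcN : (N:ℝ) * c = ∑ j, v j := by
      rw [hcdef, ← mul_assoc, mul_inv_cancel₀ hNR.ne', one_mul]
    have expand : (fun i => v i - c) ⬝ᵥ (fun i => v i - c)
        = v ⬝ᵥ v - 2 * c * (∑ j, v j) + (N:ℝ) * (c * c) := by
      simp only [dotProduct]
      have hring : ∀ i : Fin N, (v i - c) * (v i - c) = v i * v i - 2 * c * v i + c * c :=
        fun i => by ring
      simp only [hring]
      rw [Finset.sum_add_distrib, Finset.sum_sub_distrib, Finset.sum_const,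
        Finset.card_univ, Fintype.card_fin, ← Finset.mul_sum]
      push_cast
      ring
    rw [expand, ← hcN]
    nlinarith [mul_self_nonneg c, hNR]
  -- the quadratic-form bound
  set ρ : ℝ := max (max (a - lpmin + k * lcmin) (-(a - lpmax + k * lcmax))) 0 with hρ
  have hρ0 : 0 ≤ ρ := le_max_right _ _
  have hρ1 : ρ < 1 := by
    have h1 : k * lcmin < 1 - a + lpmin := (lt_div_iff₀ hc0).mp hku
    have h2 : -1 - a + lpmax < k * lcmax := (div_lt_iff₀ hc2).mp hkl
    apply max_lt (max_lt (by linarith) (by linarith)) one_pos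
  have hdotnn : ∀ v : Fin N → ℝ, 0 ≤ v ⬝ᵥ v := fun v =>
    Finset.sum_nonneg fun i _ => mul_self_nonneg _
  have hbound : ∀ v : Fin N → ℝ, |v ⬝ᵥ (Q *ᵥ v)| ≤ ρ * (v ⬝ᵥ v) := by
    intro v
    set w : Fin N → ℝ := P *ᵥ v with hw
    have hws : ∑ i, w i = 0 := hsum v
    have hvQ : v ⬝ᵥ (Q *ᵥ v) = w ⬝ᵥ (M *ᵥ w) := by
      rw [hw, ← hQ2, ← mulVec_mulVec, dotProduct_mulVec v P, ← mulVec_transpose, hPsymm,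
        ← mulVec_mulVec]
    have hexp : w ⬝ᵥ (M *ᵥ w) = a * (w ⬝ᵥ w) - w ⬝ᵥ (Lp *ᵥ w) + k * (w ⬝ᵥ (Lc *ᵥ w)) := by
      simp [hM, sub_mulVec, add_mulVec, smul_mulVec, one_mulVec, dotProduct_sub,
        dotProduct_add, dotProduct_smul, smul_eq_mul]
    have hp1 := (hqp w hws).1
    have hp2 := (hqp w hws).2
    have hc1 := (hqc w hws).1
    have hc2' := (hqc w hws).2
    have hk1 : k * (w ⬝ᵥ (Lc *ᵥ w)) ≤ k * (lcmin * (w ⬝ᵥ w)) :=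
      mul_le_mul_of_nonpos_left hc1 hk0.le
    have hk2 : k * (lcmax * (w ⬝ᵥ w)) ≤ k * (w ⬝ᵥ (Lc *ᵥ w)) :=
      mul_le_mul_of_nonpos_left hc2' hk0.le
    have hwv : w ⬝ᵥ w ≤ v ⬝ᵥ v := hwle v
    have hwn : 0 ≤ w ⬝ᵥ w := hdotnn w
    have hb1 : a - lpmin + k * lcmin ≤ ρ := le_max_of_le_left (le_max_left _ _)
    have hb2 : -(a - lpmax + k * lcmax) ≤ ρ := le_max_of_le_left (le_max_right _ _)
    have e2 : (a - lpmin + k * lcmin) * (w ⬝ᵥ w) ≤ ρ * (w ⬝ᵥ w) :=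
      mul_le_mul_of_nonneg_right hb1 hwn
    have e2' : -(ρ * (w ⬝ᵥ w)) ≤ (a - lpmax + k * lcmax) * (w ⬝ᵥ w) := by
      have := mul_le_mul_of_nonneg_right hb2 hwn
      linarith
    have e3 : ρ * (w ⬝ᵥ w) ≤ ρ * (v ⬝ᵥ v) := mul_le_mul_of_nonneg_left hwv hρ0
    have e1 : a * (w ⬝ᵥ w) - w ⬝ᵥ (Lp *ᵥ w) + k * (w ⬝ᵥ (Lc *ᵥ w))
        ≤ (a - lpmin + k * lcmin) * (w ⬝ᵥ w) := by
      have : (a - lpmin + k * lcmin) * (w ⬝ᵥ w)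
          = a * (w ⬝ᵥ w) - lpmin * (w ⬝ᵥ w) + k * (lcmin * (w ⬝ᵥ w)) := by ring
      linarith [hp1, hk1]
    have e1' : (a - lpmax + k * lcmax) * (w ⬝ᵥ w)
        ≤ a * (w ⬝ᵥ w) - w ⬝ᵥ (Lp *ᵥ w) + k * (w ⬝ᵥ (Lc *ᵥ w)) := by
      have : (a - lpmax + k * lcmax) * (w ⬝ᵥ w)
          = a * (w ⬝ᵥ w) - lpmax * (w ⬝ᵥ w) + k * (lcmax * (w ⬝ᵥ w)) := by ring
      linarith [hp2, hk2]
    rw [hvQ, hexp, abs_le]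
    exact ⟨by linarith, by linarith⟩
  have heig : ∀ i, |hQherm.eigenvalues i| < 1 := fun i =>
    lt_of_le_of_lt (aux_eig_abs_le hQherm hbound i) hρ1
  have htend := aux_pow_tendsto hQherm heig
  have hpowQ : ∀ t : ℕ, Q ^ (t + 1) = M ^ (t + 1) * P := by
    intro t
    induction t with
    | zero => simp [hQ]
    | succ t ih =>
      rw [pow_succ, ih, pow_succ]
      conv_lhs => rw [hQ, mul_assoc, hQ2, hQ, ← mul_assoc]
      simp [pow_succ]

  refine Filter.Tendsto.congr' ?_ htend
  rw [Filter.EventuallyEq, Filter.eventually_atTop]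
  refine ⟨1, fun t ht => ?_⟩
  obtain ⟨s, rfl⟩ := Nat.exists_eq_add_of_le ht
  simpa [Nat.add_comm] using hpowQ s
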